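/- Let φ²(t) = 5^{−2} e^{−2+2√(1−t)} (2t + 2√(1−t) − 2)² for t ∈ (0,1] and φ²(0) = 0. Then there exists t₀ ∈ (0,1) such that φ² is convex and strictly increasing on [0, t₀], and there exists C > 0 such that φ²(2t) ≤ C φ²(t) for all t ∈ (0, t₀/2] (i.e. φ² satisfies the Δ₂-condition at 0). -/

import Mathlib

open Real Set

noncomputable section

/-- `φ²(t) = 5⁻² e^{-2+2√(1-t)} (2t + 2√(1-t) - 2)²` (with `φ²(0) = 0`). -/
def phi2 (t : ℝ) : ℝ :=
  (5 : ℝ) ^ (-2 : ℤ) * Real.exp (-2 + 2 * Real.sqrt (1 - t)) *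
    (2 * t + 2 * Real.sqrt (1 - t) - 2) ^ 2

/-- First derivative of `phi2` (for `t < 1`). -/
def p1 (t : ℝ) : ℝ :=
  (4 / 25) * Real.exp (-2 + 2 * Real.sqrt (1 - t)) *
    ((1 - Real.sqrt (1 - t)) * (Real.sqrt (1 - t) - t))

/-- Second derivative of `phi2` (for `t < 1`). -/
def p2 (t : ℝ) : ℝ :=
  (2 / 25) * Real.exp (-2 + 2 * Real.sqrt (1 - t)) *
    (3 * Real.sqrt (1 - t) - 2 - 2 * t)

lemma sqrt_hasDerivAt {t : ℝ} (ht : t < 1) :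
    HasDerivAt (fun t : ℝ => Real.sqrt (1 - t)) (1 / (2 * Real.sqrt (1 - t)) * (-1)) t := by
  have h1 : (0:ℝ) < 1 - t := by linarith
  have hlin : HasDerivAt (fun t : ℝ => 1 - t) (-1) t := by
    simpa using (hasDerivAt_id t).const_sub 1
  exact (Real.hasDerivAt_sqrt h1.ne').comp t hlin

lemma exp_hasDerivAt {t : ℝ} (ht : t < 1) :
    HasDerivAt (fun t : ℝ => Real.exp (-2 + 2 * Real.sqrt (1 - t)))
      (Real.exp (-2 + 2 * Real.sqrt (1 - t)) * (2 * (1 / (2 * Real.sqrt (1 - t)) * (-1)))) t :=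
  (((sqrt_hasDerivAt ht).const_mul 2).const_add (-2)).exp

lemma phi2_hasDerivAt {t : ℝ} (ht : t < 1) : HasDerivAt phi2 (p1 t) t := by
  have h1 : (0:ℝ) < 1 - t := by linarith
  have hs0 : Real.sqrt (1 - t) ≠ 0 := (Real.sqrt_pos.mpr h1).ne'
  have hB : HasDerivAt (fun t : ℝ => (2 * t + 2 * Real.sqrt (1 - t) - 2) ^ 2)
      ((2 : ℕ) * (2 * t + 2 * Real.sqrt (1 - t) - 2) ^ 1 *
        (2 + 2 * (1 / (2 * Real.sqrt (1 - t)) * (-1)))) t := by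
    have hin : HasDerivAt (fun t : ℝ => 2 * t + 2 * Real.sqrt (1 - t) - 2)
        (2 + 2 * (1 / (2 * Real.sqrt (1 - t)) * (-1))) t := by
      have := (((hasDerivAt_id t).const_mul 2).add ((sqrt_hasDerivAt ht).const_mul 2)).sub_const 2
      simpa using this
    exact hin.pow 2
  have key := ((exp_hasDerivAt ht).const_mul ((5:ℝ) ^ (-2:ℤ))).mul hB
  refine HasDerivAt.congr_deriv (f := phi2) key (Eq.symm ?_)
  have hsq : Real.sqrt (1 - t) ^ 2 = 1 - t := Real.sq_sqrt h1.le
  simp only [p1]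
  set s := Real.sqrt (1 - t) with hsdef
  have ht2 : t = 1 - s ^ 2 := by linarith
  rw [ht2]
  have h5 : ((5:ℝ) ^ (-2:ℤ)) = 1 / 25 := by norm_num
  rw [h5]
  field_simp
  ring

lemma p1_hasDerivAt {t : ℝ} (ht : t < 1) : HasDerivAt p1 (p2 t) t := by
  have h1 : (0:ℝ) < 1 - t := by linarith
  have hs0 : Real.sqrt (1 - t) ≠ 0 := (Real.sqrt_pos.mpr h1).ne'
  have hC : HasDerivAt (fun t : ℝ => (1 - Real.sqrt (1 - t)) * (Real.sqrt (1 - t) - t))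
      ((-(1 / (2 * Real.sqrt (1 - t)) * (-1))) * (Real.sqrt (1 - t) - t) +
        (1 - Real.sqrt (1 - t)) * ((1 / (2 * Real.sqrt (1 - t)) * (-1)) - 1)) t := by
    have hl : HasDerivAt (fun t : ℝ => 1 - Real.sqrt (1 - t))
        (-(1 / (2 * Real.sqrt (1 - t)) * (-1))) t := (sqrt_hasDerivAt ht).const_sub 1
    have hr : HasDerivAt (fun t : ℝ => Real.sqrt (1 - t) - t)
        ((1 / (2 * Real.sqrt (1 - t)) * (-1)) - 1) t :=
      (sqrt_hasDerivAt ht).sub (hasDerivAt_id t)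
    exact hl.mul hr
  have key := ((exp_hasDerivAt ht).const_mul ((4:ℝ) / 25)).mul hC
  have hfun : p1 = fun t : ℝ => (4 / 25) * Real.exp (-2 + 2 * Real.sqrt (1 - t)) *
      ((1 - Real.sqrt (1 - t)) * (Real.sqrt (1 - t) - t)) := rfl
  rw [hfun]
  refine key.congr_deriv (Eq.symm ?_)
  have hsq : Real.sqrt (1 - t) ^ 2 = 1 - t := Real.sq_sqrt h1.le
  simp only [p2]
  set s := Real.sqrt (1 - t) with hsdef
  have ht2 : t = 1 - s ^ 2 := by linarith
  rw [ht2]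
  field_simp
  ring

lemma phi2_continuous : Continuous phi2 := by
  unfold phi2
  fun_prop

lemma phi2_upper {t : ℝ} (h0 : 0 ≤ t) (h1 : t ≤ 1) : phi2 t ≤ (1 / 25) * t ^ 2 := by
  have h1' : (0:ℝ) ≤ 1 - t := by linarith
  have hsq : Real.sqrt (1 - t) ^ 2 = 1 - t := Real.sq_sqrt h1'
  have hsnn : 0 ≤ Real.sqrt (1 - t) := Real.sqrt_nonneg _
  have hs1 : Real.sqrt (1 - t) ≤ 1 := by
    nlinarith [hsq, hsnn]
  set s := Real.sqrt (1 - t) with hsdef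
  have hE : Real.exp (-2 + 2 * s) ≤ 1 := by
    rw [show (1:ℝ) = Real.exp 0 from (Real.exp_zero).symm]
    exact Real.exp_le_exp.mpr (by linarith)
  have hEpos : 0 < Real.exp (-2 + 2 * s) := Real.exp_pos _
  have hB : (2 * t + 2 * s - 2) ^ 2 ≤ t ^ 2 := by
    nlinarith [sq_nonneg (1 - s), mul_nonneg (mul_nonneg (mul_nonneg (sub_nonneg.2 hs1)
      (sub_nonneg.2 hs1)) (sub_nonneg.2 hs1)) (by linarith : (0:ℝ) ≤ 1 + 3 * s)]
  have h5 : ((5:ℝ) ^ (-2:ℤ)) = 1 / 25 := by norm_num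
  unfold phi2
  rw [h5]
  calc (1:ℝ)/25 * Real.exp (-2 + 2 * s) * (2 * t + 2 * s - 2) ^ 2
      ≤ 1/25 * 1 * t ^ 2 := by
        apply mul_le_mul _ hB (sq_nonneg _)
        · positivity
        · nlinarith [hEpos, hE]
    _ = (1/25) * t ^ 2 := by ring

lemma phi2_lower {t : ℝ} (h0 : 0 ≤ t) (h1 : t ≤ 1 / 2) :
    Real.exp (-2) / 50 * t ^ 2 ≤ phi2 t := by
  have h1' : (0:ℝ) ≤ 1 - t := by linarith
  have hsq : Real.sqrt (1 - t) ^ 2 = 1 - t := Real.sq_sqrt h1'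
  have hsnn : 0 ≤ Real.sqrt (1 - t) := Real.sqrt_nonneg _
  have hs1 : Real.sqrt (1 - t) ≤ 1 := by nlinarith [hsq, hsnn]
  set s := Real.sqrt (1 - t) with hsdef
  have hs2 : 1 / 2 ≤ s ^ 2 := by rw [hsq]; linarith
  have hE : Real.exp (-2) ≤ Real.exp (-2 + 2 * s) :=
    Real.exp_le_exp.mpr (by linarith)
  have hEpos : 0 < Real.exp (-2) := Real.exp_pos _
  have h7 : 0 ≤ 7 * s ^ 2 - 2 * s - 1 := by nlinarith
  have hB : t ^ 2 / 2 ≤ (2 * t + 2 * s - 2) ^ 2 := by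
    nlinarith [mul_nonneg (sq_nonneg (1 - s)) h7, hsq]
  have h5 : ((5:ℝ) ^ (-2:ℤ)) = 1 / 25 := by norm_num
  unfold phi2
  rw [h5]
  calc Real.exp (-2) / 50 * t ^ 2 = 1/25 * Real.exp (-2) * (t ^ 2 / 2) := by ring
    _ ≤ 1/25 * Real.exp (-2 + 2 * s) * (2 * t + 2 * s - 2) ^ 2 := by
        apply mul_le_mul _ hB (by positivity) (by positivity)
        nlinarith [hE, hEpos]

/-- On a neighborhood of `0`, `φ²` is a nondegenerate Orlicz function (convex and
strictly increasing) satisfying the `Δ₂`-condition at `0`. -/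
theorem statement18 : ∃ t₀ : ℝ, 0 < t₀ ∧ t₀ < 1 ∧
    ConvexOn ℝ (Set.Icc 0 t₀) phi2 ∧ StrictMonoOn phi2 (Set.Icc 0 t₀) ∧
    ∃ C : ℝ, 0 < C ∧ ∀ t : ℝ, 0 < t → t ≤ t₀ / 2 → phi2 (2 * t) ≤ C * phi2 t := by
  refine ⟨1/4, by norm_num, by norm_num, ?_, ?_, ?_⟩
  · -- convexity
    have hD : Convex ℝ (Set.Icc (0:ℝ) (1/4)) := convex_Icc _ _
    have hint : interior (Set.Icc (0:ℝ) (1/4)) = Set.Ioo 0 (1/4) := interior_Icc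
    have hderivEq : ∀ x : ℝ, x < 1 → deriv phi2 x = p1 x := fun x hx =>
      (phi2_hasDerivAt hx).deriv
    refine convexOn_of_deriv2_nonneg hD phi2_continuous.continuousOn ?_ ?_ ?_
    · intro x hx
      rw [hint] at hx
      exact (phi2_hasDerivAt (by linarith [hx.2] : x < 1)).differentiableAt.differentiableWithinAt
    · intro x hx
      rw [hint] at hx
      have hx1 : x < 1 := by linarith [hx.2]
      have hev : deriv phi2 =ᶠ[nhds x] p1 :=
        Filter.eventuallyEq_of_mem (Iio_mem_nhds hx1) fun y hy => hderivEq y hy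
      exact ((p1_hasDerivAt hx1).congr_of_eventuallyEq hev).differentiableAt.differentiableWithinAt
    · intro x hx
      rw [hint] at hx
      have hx1 : x < 1 := by linarith [hx.2]
      have hev : deriv phi2 =ᶠ[nhds x] p1 :=
        Filter.eventuallyEq_of_mem (Iio_mem_nhds hx1) fun y hy => hderivEq y hy
      have h2 : deriv^[2] phi2 x = deriv (deriv phi2) x := rfl
      rw [h2, hev.deriv_eq, (p1_hasDerivAt hx1).deriv]
      -- 0 ≤ p2 x
      have h1' : (0:ℝ) < 1 - x := by linarith [hx.2]
      have hsq : Real.sqrt (1 - x) ^ 2 = 1 - x := Real.sq_sqrt h1'.le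
      have hsnn : 0 ≤ Real.sqrt (1 - x) := Real.sqrt_nonneg _
      have hEpos : 0 < Real.exp (-2 + 2 * Real.sqrt (1 - x)) := Real.exp_pos _
      have hkey : 0 ≤ 3 * Real.sqrt (1 - x) - 2 - 2 * x := by
        nlinarith [hsq, hsnn, hx.1, hx.2, sq_nonneg (Real.sqrt (1 - x) - 1)]
      unfold p2
      positivity
  · -- strict monotonicity
    have hD : Convex ℝ (Set.Icc (0:ℝ) (1/4)) := convex_Icc _ _
    refine strictMonoOn_of_deriv_pos hD phi2_continuous.continuousOn ?_
    intro x hx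
    rw [interior_Icc] at hx
    have hx1 : x < 1 := by linarith [hx.2]
    rw [(phi2_hasDerivAt hx1).deriv]
    have h1' : (0:ℝ) < 1 - x := by linarith
    have hsq : Real.sqrt (1 - x) ^ 2 = 1 - x := Real.sq_sqrt h1'.le
    have hsnn : 0 ≤ Real.sqrt (1 - x) := Real.sqrt_nonneg _
    have hs1 : Real.sqrt (1 - x) < 1 := by nlinarith [hx.1]
    have hst : x < Real.sqrt (1 - x) := by nlinarith [hx.1, hx.2]
    unfold p1
    have hEpos : 0 < Real.exp (-2 + 2 * Real.sqrt (1 - x)) := Real.exp_pos _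
    have := mul_pos (by linarith : (0:ℝ) < 1 - Real.sqrt (1 - x))
      (by linarith : (0:ℝ) < Real.sqrt (1 - x) - x)
    positivity
  · -- Δ₂ condition
    refine ⟨8 * Real.exp 2, by positivity, ?_⟩
    intro t ht0 ht
    have ht8 : t ≤ 1/8 := by linarith
    have h2t1 : 2 * t ≤ 1 := by linarith
    have hup := phi2_upper (by positivity : (0:ℝ) ≤ 2 * t) h2t1
    have hlo := phi2_lower ht0.le (by linarith : t ≤ 1/2)
    have hee : Real.exp 2 * Real.exp (-2) = 1 := by
      rw [← Real.exp_add]; norm_num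
    calc phi2 (2 * t) ≤ (1/25) * (2 * t) ^ 2 := hup
      _ = 8 * Real.exp 2 * (Real.exp (-2) / 50 * t ^ 2) := by
          nlinarith [hee]
      _ ≤ 8 * Real.exp 2 * phi2 t := by
          apply mul_le_mul_of_nonneg_left hlo (by positivity)
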